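/- arXiv:2604.08331 — 2 statements merged into one kernel-verified Lean document; each statement's English description precedes it below -/
import Mathlib

section
/- If every metavariable occurs in the source pattern, then the partial function ⟦src(f)⁻⟧ ≫ ⟦src(f)⁺⟧ is the identity on its domain of definition, and ⟦src(f)⁺⟧ ≫ ⟦src(f)⁻⟧ is the total identity on assignments: matching the result of substitution recovers the original assignment. -/
/-- Syntax trees over a signature `S` with arity function `ar`. -/
inductive STree (S : Type) (ar : S → ℕ) : Type
  | leaf : ℕ → STree S ar
  | node : (g : S) → (Fin (ar g) → STree S ar) → STree S ar

/-- Terms over signature `S` with metavariables in `Fin m`. -/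
inductive Term (S : Type) (ar : S → ℕ) (m : ℕ) : Type
  | var : Fin m → Term S ar m
  | op : (g : S) → (Fin (ar g) → Term S ar m) → Term S ar m

variable {S : Type} {ar : S → ℕ} [DecidableEq S]

/-- Substitution of terms for the metavariables of a term. -/
def Term.subst {m k : ℕ} (σ : Fin m → Term S ar k) : Term S ar m → Term S ar k
  | .var i => σ i
  | .op g ts => .op g (fun j => (ts j).subst σ)

/-- Substitution of trees for the metavariables of a term (evaluation). -/
def Term.substT {m : ℕ} (σ : Fin m → STree S ar) : Term S ar m → STree S ar
  | .var i => σ i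
  | .op g ts => .node g (fun j => (ts j).substT σ)

/-- Number of occurrences of the metavariable `i` in a term. -/
def Term.countVar {m : ℕ} (i : Fin m) : Term S ar m → ℕ
  | .var j => if j = i then 1 else 0
  | .op _ ts => ∑ j, (ts j).countVar i

/-- A partial assignment of trees to metavariables. -/
def PAsn (S : Type) (ar : S → ℕ) (m : ℕ) : Type := Fin m → Option (STree S ar)

open Classical in
/-- Merge two partial assignments; fails if they disagree on some variable. -/
noncomputable def mergeAsn {m : ℕ} (σ τ : PAsn S ar m) : Option (PAsn S ar m) :=
  if ∀ i : Fin m, ∀ a ∈ σ i, ∀ b ∈ τ i, a = b then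
    some (fun i => (σ i).orElse (fun _ => τ i))
  else none

/-- Merge a finite family of optional partial assignments. -/
noncomputable def mergeAll {m : ℕ} : {k : ℕ} → (Fin k → Option (PAsn S ar m)) → Option (PAsn S ar m)
  | 0, _ => some (fun _ => none)
  | _ + 1, f =>
      (f 0).bind fun σ => (mergeAll (fun j => f j.succ)).bind (mergeAsn σ)

/-- Pattern matching of a tree against a term: returns the partial assignment of
trees to the metavariables occurring in the pattern, if the shapes agree. -/
noncomputable def Term.pmatch {m : ℕ} : Term S ar m → STree S ar → Option (PAsn S ar m)
  | .var i, t => some (fun j => if j = i then some t else none)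
  | .op _ _, .leaf _ => none
  | .op g ps, .node g' ts =>
      if h : g' = g then
        mergeAll (fun j : Fin (ar g) => (ps j).pmatch (ts (Fin.cast (by rw [h]) j)))
      else none

/-- Matching a tuple of trees against a tuple of patterns. -/
noncomputable def matchTuple {m a : ℕ} (u : Fin a → Term S ar m) (x : Fin a → STree S ar) :
    Option (PAsn S ar m) :=
  mergeAll (fun i : Fin a => (u i).pmatch (x i))

/-- Evaluating a tuple of patterns (a syntax map) at an assignment of trees. -/
def evalTuple {m a : ℕ} (u : Fin a → Term S ar m) (σ : Fin m → STree S ar) :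
    Fin a → STree S ar := fun i => (u i).substT σ

/-- Extract a total assignment from a partial one, if it is everywhere defined. -/
noncomputable def totalize {m : ℕ} (π : PAsn S ar m) : Option (Fin m → STree S ar) :=
  if h : ∀ i, (π i).isSome then some (fun i => (π i).get (h i)) else none

/-- The matcher semantics `⟦u⁻⟧` of a tuple of patterns. -/
noncomputable def matcherSem {m a : ℕ} (u : Fin a → Term S ar m)
    (x : Fin a → STree S ar) : Option (Fin m → STree S ar) :=
  (matchTuple u x).bind totalize

/-- Kleisli composition of partial functions. -/
def kcomp {A B C : Type*} (f : A → Option B) (g : B → Option C) : A → Option C :=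
  fun a => (f a).bind g

/-- Tensor of partial functions on products. -/
def pprod {A B C D : Type*} (f : A → Option B) (g : C → Option D) :
    A × C → Option (B × D) :=
  fun x => (f x.1).bind fun b => (g x.2).map fun d => (b, d)

section Aux

/-- `π` is compatible with the total assignment `σ`. -/
def compatA {m : ℕ} (π : PAsn S ar m) (σ : Fin m → STree S ar) : Prop :=
  ∀ i v, π i = some v → σ i = v

/-- `π` is a sub-assignment of `ρ`. -/
def subA {m : ℕ} (π ρ : PAsn S ar m) : Prop :=
  ∀ i v, π i = some v → ρ i = some v

lemma compatA_of_subA {m : ℕ} {π ρ : PAsn S ar m} {σ} (h : subA π ρ)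
    (hc : compatA ρ σ) : compatA π σ :=
  fun i v hv => hc i v (h i v hv)

lemma mergeAsn_eq_some {m : ℕ} {π τ ρ : PAsn S ar m} (h : mergeAsn π τ = some ρ) :
    (∀ i, ∀ a ∈ π i, ∀ b ∈ τ i, a = b) ∧
      ρ = fun i => (π i).orElse (fun _ => τ i) := by
  unfold mergeAsn at h
  split at h
  · exact ⟨‹_›, (Option.some_injective _ h).symm⟩
  · simp at h

lemma mergeAsn_subA {m : ℕ} {π τ ρ : PAsn S ar m} (h : mergeAsn π τ = some ρ) :
    subA π ρ ∧ subA τ ρ := by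
  obtain ⟨hag, rfl⟩ := mergeAsn_eq_some h
  constructor
  · intro i v hv; simp [hv]
  · intro i v hv
    cases hπ : π i with
    | none => simp [hπ, hv]
    | some w => simp [hπ]; exact hag i w hπ v hv

lemma mergeAsn_compat {m : ℕ} {π τ : PAsn S ar m} {σ} (hπ : compatA π σ)
    (hτ : compatA τ σ) : ∃ ρ, mergeAsn π τ = some ρ ∧ compatA ρ σ := by
  have hag : ∀ i, ∀ a ∈ π i, ∀ b ∈ τ i, a = b := by
    intro i a ha b hb
    rw [← hπ i a ha, ← hτ i b hb]
  refine ⟨(fun i => (π i).orElse (fun _ => τ i)), by unfold mergeAsn; rw [if_pos hag], ?_⟩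
  intro i v hv
  cases hp : π i with
  | none => simp [hp] at hv; exact hτ i v hv
  | some w => simp [hp] at hv; exact hv ▸ hπ i w hp

lemma mergeAll_sound {m : ℕ} : ∀ {k : ℕ} {f : Fin k → Option (PAsn S ar m)}
    {ρ : PAsn S ar m}, mergeAll f = some ρ →
    ∀ j, ∃ π, f j = some π ∧ subA π ρ := by
  intro k
  induction k with
  | zero => intro f ρ _ j; exact absurd j.2 (by simp)
  | succ k ih =>
    intro f ρ h j
    simp only [mergeAll, Option.bind_eq_some_iff] at h
    obtain ⟨π0, h0, ρ', h', hm⟩ := h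
    obtain ⟨s0, s'⟩ := mergeAsn_subA hm
    cases j using Fin.cases with
    | zero => exact ⟨π0, h0, s0⟩
    | succ j' =>
      obtain ⟨π, hπ, hs⟩ := ih h' j'
      exact ⟨π, hπ, fun i v hv => s' i v (hs i v hv)⟩

lemma mergeAll_complete {m : ℕ} {σ : Fin m → STree S ar} :
    ∀ {k : ℕ} {f : Fin k → Option (PAsn S ar m)},
    (∀ j, ∃ π, f j = some π ∧ compatA π σ) →
    ∃ ρ, mergeAll f = some ρ ∧ compatA ρ σ := by
  intro k
  induction k with
  | zero =>
    intro f _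
    exact ⟨_, rfl, fun i v hv => by simp at hv⟩
  | succ k ih =>
    intro f hf
    obtain ⟨π0, h0, hc0⟩ := hf 0
    obtain ⟨ρ', h', hc'⟩ := ih (fun j => hf j.succ)
    obtain ⟨ρ, hm, hc⟩ := mergeAsn_compat hc0 hc'
    exact ⟨ρ, by simp [mergeAll, h0, h', hm], hc⟩

lemma pmatch_sound {m : ℕ} {σ : Fin m → STree S ar} :
    ∀ (p : Term S ar m) (t : STree S ar) (π : PAsn S ar m),
      p.pmatch t = some π → compatA π σ → p.substT σ = t := by
  intro p
  induction p with
  | var i =>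
    intro t π h hc
    simp only [Term.pmatch, Option.some_inj] at h
    obtain rfl := Option.some_injective _ h
    exact hc i t (by simp)
  | op g ts ih =>
    intro t π h hc
    cases t with
    | leaf n => simp [Term.pmatch] at h
    | node g' us =>
      unfold Term.pmatch at h
      split at h
      case isTrue hg =>
        subst hg
        have hcast : ∀ j : Fin (ar g'), Fin.cast (by rw [show g' = g' from rfl]) j = j := by
          intro j; rfl
        show Term.substT σ (Term.op g' ts) = STree.node g' us
        simp only [Term.substT]
        congr 1
        funext j
        obtain ⟨πj, hj, hsub⟩ := mergeAll_sound h j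
        exact ih j _ _ hj (compatA_of_subA hsub hc)
      case isFalse => simp at h

lemma pmatch_complete {m : ℕ} (σ : Fin m → STree S ar) :
    ∀ p : Term S ar m, ∃ π, p.pmatch (p.substT σ) = some π ∧ compatA π σ ∧
      ∀ i, 0 < p.countVar i → (π i).isSome := by
  intro p
  induction p with
  | var i =>
    refine ⟨_, rfl, ?_, ?_⟩
    · intro j v hv
      by_cases hji : j = i <;> simp [hji, Term.substT] at hv <;> simp [hji, hv]
    · intro j hj
      simp only [Term.countVar] at hj
      split at hj
      · next hij => subst hij; simp
      · omega
  | op g ts ih =>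
    choose πs hπs hcs hss using ih
    obtain ⟨ρ, hρ, hcρ⟩ := mergeAll_complete (σ := σ)
      (f := fun j : Fin (ar g) => (ts j).pmatch ((ts j).substT σ))
      (fun j => ⟨πs j, hπs j, hcs j⟩)
    refine ⟨ρ, ?_, hcρ, ?_⟩
    · show Term.pmatch _ _ = some ρ
      simp only [Term.substT, Term.pmatch, dif_pos rfl, dite_true, Fin.cast_eq_self]
      convert hρ using 2
    · intro i hi
      simp only [Term.countVar] at hi
      have : ∃ j, 0 < (ts j).countVar i := by
        by_contra hcon
        push_neg at hcon
        simp only [Nat.le_zero] at hcon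
        simp [hcon] at hi
      obtain ⟨j, hj⟩ := this
      obtain ⟨πj, hj', hsub⟩ := mergeAll_sound hρ j
      rw [hπs j] at hj'
      obtain rfl : πs j = πj := Option.some_injective _ hj'
      have := hss j i hj
      obtain ⟨v, hv⟩ := Option.isSome_iff_exists.mp this
      exact Option.isSome_iff_exists.mpr ⟨v, hsub i v hv⟩

end Aux

/-- If every metavariable occurs in the source patterns, then
`⟦src(f)⁻⟧ ≫ ⟦src(f)⁺⟧` is the identity on its domain of definition, and
`⟦src(f)⁺⟧ ≫ ⟦src(f)⁻⟧` is the (total) identity on assignments. -/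
theorem stmt14 {m a : ℕ} (src : Fin a → Term S ar m)
    (hocc : ∀ i : Fin m, ∃ j : Fin a, 0 < (src j).countVar i) :
    (∀ (x y : Fin a → STree S ar),
      (matcherSem src x).bind (fun σ => some (evalTuple src σ)) = some y → y = x) ∧
    (∀ σ : Fin m → STree S ar, matcherSem src (evalTuple src σ) = some σ) := by
  constructor
  · intro x y h
    simp only [matcherSem, Option.bind_eq_some_iff] at h
    obtain ⟨σ, hσ, hy⟩ := h
    obtain rfl : y = evalTuple src σ := (Option.some_injective _ hy).symm
    obtain ⟨π, hπ, htot⟩ := hσ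
    unfold totalize at htot
    split at htot
    case isFalse => simp at htot
    case isTrue hdef =>
      obtain rfl := Option.some_injective _ htot
      have hc : compatA π (fun i => (π i).get (hdef i)) := by
        intro i v hv
        simp [Option.get_of_mem _ hv]
      funext j
      obtain ⟨πj, hj, hsub⟩ := mergeAll_sound hπ j
      exact pmatch_sound (src j) (x j) πj hj (compatA_of_subA hsub hc)
  · intro σ
    choose πs hπs hcs hss using fun j => pmatch_complete σ (src j)
    obtain ⟨ρ, hρ, hcρ⟩ := mergeAll_complete (σ := σ)
      (f := fun j : Fin a => (src j).pmatch ((src j).substT σ))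
      (fun j => ⟨πs j, hπs j, hcs j⟩)
    have hmt : matchTuple src (evalTuple src σ) = some ρ := hρ
    have hdef : ∀ i, (ρ i).isSome := by
      intro i
      obtain ⟨j, hj⟩ := hocc i
      obtain ⟨πj, hj', hsub⟩ := mergeAll_sound hρ j
      rw [hπs j] at hj'
      obtain rfl : πs j = πj := Option.some_injective _ hj'
      obtain ⟨v, hv⟩ := Option.isSome_iff_exists.mp (hss j i hj)
      exact Option.isSome_iff_exists.mpr ⟨v, hsub i v hv⟩
    rw [matcherSem, hmt]
    show totalize ρ = some σ
    rw [totalize, dif_pos hdef]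
    congr 1
    funext i
    obtain ⟨v, hv⟩ := Option.isSome_iff_exists.mp (hdef i)
    rw [(hcρ i v hv : σ i = v)]
    simp [Option.get_of_mem _ hv]
end

section
/- A derivation d with boundary (s, t) is valid in the sense that ⟦s⁺⟧ ≫ ⟦d⟧ ≫ ⟦t⁻⟧ is total (defined on the canonical leaf inputs) whenever d is a single generator f and there is a syntax-map factorization σ : m_f ← m with s = σ ≫ src(f) and t = σ ≫ tgt(f); i.e., instances of a rule under substitution of metavariables are valid proofs of the substituted boundary. -/
variable {S : Type} {ar : S → ℕ} [DecidableEq S]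

/-- The semantics `⟦src(f)⁻⟧ ≫ ⟦tgt(f)⁺⟧` of a proof generator. -/
noncomputable def genSem {m a b : ℕ} (src : Fin a → Term S ar m)
    (tgt : Fin b → Term S ar m) (x : Fin a → STree S ar) :
    Option (Fin b → STree S ar) :=
  (matcherSem src x).map (fun σ => evalTuple tgt σ)

/-- A partial assignment is subordinate to a total one. -/
def SubOf {m : ℕ} (ρ : Fin m → STree S ar) (π : PAsn S ar m) : Prop :=
  ∀ i x, π i = some x → x = ρ i

lemma mergeAsn_sub {m : ℕ} {ρ : Fin m → STree S ar} {π π' : PAsn S ar m}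
    (h : SubOf ρ π) (h' : SubOf ρ π') :
    mergeAsn π π' = some (fun i => (π i).orElse (fun _ => π' i)) := by
  unfold mergeAsn
  rw [if_pos]
  · rfl
  intro i a ha b hb
  rw [h i a ha, h' i b hb]

lemma mergeAll_sub {m : ℕ} (ρ : Fin m → STree S ar) :
    ∀ {k : ℕ} (πf : Fin k → PAsn S ar m), (∀ j, SubOf ρ (πf j)) →
    ∃ π, mergeAll (fun j => some (πf j)) = some π ∧ SubOf ρ π ∧
      ∀ i, (π i).isSome ↔ ∃ j, (πf j i).isSome := by
  intro k
  induction k with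
  | zero =>
    intro πf h
    refine ⟨fun _ => none, rfl, fun i x hx => by simp at hx, by simp⟩
  | succ k ih =>
    intro πf h
    obtain ⟨π, hπ, hsub, hiff⟩ := ih (fun j => πf j.succ) (fun j => h j.succ)
    refine ⟨fun i => (πf 0 i).orElse (fun _ => π i), ?_, ?_, ?_⟩
    · show ((some (πf 0)).bind fun σ =>
        (mergeAll (fun j => some (πf j.succ))).bind (mergeAsn σ)) = _
      rw [Option.bind_some, hπ, Option.bind_some, mergeAsn_sub (h 0) hsub]
      rfl
    · intro i x hx
      have hx' : (πf 0 i).orElse (fun _ => π i) = some x := hx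
      rcases h0 : πf 0 i with _ | y
      · rw [h0] at hx'; simp [Option.orElse] at hx'
        exact hsub i x hx'
      · rw [h0] at hx'; simp [Option.orElse] at hx'
        subst hx'; exact h 0 i y h0
    · intro i
      rw [Fin.exists_fin_succ, ← hiff i]
      rcases h0 : πf 0 i with _ | y <;> simp [Option.orElse, h0]

lemma pmatch_substT {m : ℕ} (ρ : Fin m → STree S ar) (p : Term S ar m) :
    ∃ π, p.pmatch (p.substT ρ) = some π ∧ SubOf ρ π ∧
      ∀ i, (π i).isSome ↔ 0 < p.countVar i := by
  induction p with
  | var v =>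
    refine ⟨_, rfl, ?_, ?_⟩
    · intro i x hx
      by_cases h : i = v
      · subst h
        simp at hx
        exact hx.symm
      · simp [h] at hx
    · intro i
      by_cases h : i = v
      · subst h; simp [Term.countVar]
      · simp [Term.countVar, h, Ne.symm h]
  | op g ts ih =>
    choose πf hπf hsub hiff using ih
    have hcast : ∀ (h : g = g) (j : Fin (ar g)), Fin.cast (by rw [h]) j = j := by
      intro h j; rfl
    have : Term.pmatch (.op g ts) ((Term.op g ts).substT ρ) =
        mergeAll (fun j => some (πf j)) := by
      show Term.pmatch (.op g ts) (.node g fun j => (ts j).substT ρ) = _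
      rw [Term.pmatch, dif_pos rfl]
      congr 1
      funext j
      rw [hcast rfl j, hπf j]
    obtain ⟨π, hπ, hs, hi⟩ := mergeAll_sub ρ πf hsub
    refine ⟨π, this.trans hπ, hs, ?_⟩
    intro i
    rw [hi i]
    show _ ↔ 0 < ∑ j, (ts j).countVar i
    constructor
    · rintro ⟨j, hj⟩
      exact lt_of_lt_of_le ((hiff j i).mp hj)
        (Finset.single_le_sum (f := fun j => Term.countVar i (ts j))
          (fun _ _ => Nat.zero_le _) (Finset.mem_univ j))
    · intro hpos
      by_contra hnone
      push_neg at hnone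
      have hz : ∑ j, Term.countVar i (ts j) = 0 :=
        Finset.sum_eq_zero fun j _ =>
          Nat.eq_zero_of_not_pos fun hp => by
            have hh := (hiff j i).mpr hp
            exact hnone j hh
      omega

lemma matchTuple_substT {m a : ℕ} (ρ : Fin m → STree S ar)
    (u : Fin a → Term S ar m) :
    ∃ π, matchTuple u (evalTuple u ρ) = some π ∧ SubOf ρ π ∧
      ∀ i, (π i).isSome ↔ ∃ j, 0 < (u j).countVar i := by
  choose πf hπf hsub hiff using fun j => pmatch_substT ρ (u j)
  obtain ⟨π, hπ, hs, hi⟩ := mergeAll_sub ρ πf hsub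
  have : matchTuple u (evalTuple u ρ) = mergeAll (fun j => some (πf j)) := by
    unfold matchTuple evalTuple
    congr 1
    funext j
    exact hπf j
  refine ⟨π, this.trans hπ, hs, fun i => ?_⟩
  rw [hi i]
  exact exists_congr fun j => hiff j i

lemma substT_subst {m k : ℕ} (σ : Fin m → Term S ar k) (τ : Fin k → STree S ar)
    (p : Term S ar m) :
    (p.subst σ).substT τ = p.substT (fun i => (σ i).substT τ) := by
  induction p with
  | var v => rfl
  | op g ts ih =>
    show STree.node g _ = STree.node g _
    congr 1
    funext j
    exact ih j

/-- Instances of a rule under substitution of metavariables are valid proofs of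
the substituted boundary: if the type `(s, t)` factors through the source and
target of a generator `f` via a common substitution `σ`, then evaluating
`⟦s⁺⟧` on the canonical leaf inputs, then `⟦f⟧`, then matching with `⟦t⁻⟧`,
is defined. -/
theorem stmt19 {mf m a b : ℕ}
    (src : Fin a → Term S ar mf) (tgt : Fin b → Term S ar mf)
    (hocc : ∀ i : Fin mf, ∃ j : Fin a, 0 < (src j).countVar i)
    (s : Fin a → Term S ar m) (t : Fin b → Term S ar m)
    (σ : Fin mf → Term S ar m)
    (hs : ∀ i, s i = (src i).subst σ) (ht : ∀ j, t j = (tgt j).subst σ) :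
    ((genSem src tgt (evalTuple s (fun i => STree.leaf i))).bind
        (fun y => matchTuple t y)).isSome := by
  set τ : Fin m → STree S ar := fun i => STree.leaf i with hτ
  set ρ : Fin mf → STree S ar := fun i => (σ i).substT τ with hρ
  have hse : evalTuple s τ = evalTuple src ρ := by
    funext i
    show (s i).substT τ = (src i).substT ρ
    rw [hs i, substT_subst]
  have hte : evalTuple tgt ρ = evalTuple t τ := by
    funext j
    show (tgt j).substT ρ = (t j).substT τ
    rw [ht j, substT_subst]
  obtain ⟨π, hπ, hsub, hiff⟩ := matchTuple_substT ρ src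
  have hall : ∀ i, (π i).isSome := fun i => (hiff i).mpr (hocc i)
  have hget : (fun i => (π i).get (hall i)) = ρ := by
    funext i
    exact hsub i _ (Option.some_get (hall i)).symm
  have hms : matcherSem src (evalTuple s τ) = some ρ := by
    rw [hse]
    unfold matcherSem
    rw [hπ, Option.bind_some]
    unfold totalize
    rw [dif_pos hall, hget]
  obtain ⟨π', hπ', _, _⟩ := matchTuple_substT τ t
  unfold genSem
  rw [hms]
  simp only [Option.map_some, Option.bind_some]
  rw [hte, hπ']
  rfl
end
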